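/- Let 1 ≤ q ≤ p < ∞, let ε ∈ E, and let f ∈ M^p_1. Then for every dyadic cube R, |R|^{1/p−1/q} ( ∫_R ( Σ_{j=−∞}^{∞} | Σ_{Q∈𝒟_j, Q⊇R} ⟨f,h^ε_Q⟩ h^ε_Q(x) |² )^{q/2} dx )^{1/q} ≤ C ‖f‖_{M^p_1}, where the inner sum runs over dyadic cubes Q of generation j that contain R, and C depends only on n, p, q. -/

import Mathlib

open MeasureTheory Filter Topology ENNReal NNReal

noncomputable section

/-- The dyadic cube `Q_{j,m} = ∏_{i} [mᵢ/2ʲ, (mᵢ+1)/2ʲ)` in `ℝⁿ`. -/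
def dyadicCube (n : ℕ) (j : ℤ) (m : Fin n → ℤ) : Set (Fin n → ℝ) :=
  {x | ∀ i, (m i : ℝ) / 2 ^ j ≤ x i ∧ x i < ((m i : ℝ) + 1) / 2 ^ j}

/-- The one-dimensional generating Haar pattern
`h^{εᵢ}(t) = χ_{[0,1)}(2t) + (−1)^{εᵢ} χ_{[1,2)}(2t)`. -/
def haarBase1 (e : ZMod 2) (t : ℝ) : ℝ :=
  Set.indicator (Set.Ico (0 : ℝ) 1) (fun _ => (1 : ℝ)) (2 * t)
    + (-1 : ℝ) ^ e.val * Set.indicator (Set.Ico (1 : ℝ) 2) (fun _ => (1 : ℝ)) (2 * t)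

/-- `h^ε = h^{ε₁} ⊗ ⋯ ⊗ h^{εₙ}`. -/
def haarBase {n : ℕ} (ε : Fin n → ZMod 2) (x : Fin n → ℝ) : ℝ :=
  ∏ i, haarBase1 (ε i) (x i)

/-- The Haar function `h^ε_Q(x) = 2^{jn/2} h^ε(2ʲx − m)` adapted to `Q_{j,m}`. -/
def haarFn {n : ℕ} (ε : Fin n → ZMod 2) (j : ℤ) (m : Fin n → ℤ) (x : Fin n → ℝ) : ℝ :=
  (2 : ℝ) ^ (((j : ℝ) * (n : ℝ)) / 2) * haarBase ε (fun i => (2 : ℝ) ^ j * x i - (m i : ℝ))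

/-- The set `E = (ℤ/2ℤ)ⁿ \ {0}` of nontrivial sign patterns. -/
def haarSigns (n : ℕ) : Finset (Fin n → ZMod 2) :=
  Finset.univ.erase 0

/-- The Haar coefficient `⟨f, h^ε_Q⟩ = ∫ f h^ε_Q`. -/
def haarCoeff {n : ℕ} (f : (Fin n → ℝ) → ℝ) (ε : Fin n → ZMod 2) (j : ℤ) (m : Fin n → ℤ) : ℝ :=
  ∫ x, f x * haarFn ε j m x

/-- `Σ_{Q ∈ 𝒟_j} ⟨f,h^ε_Q⟩ h^ε_Q(x)`. -/
def haarLayer {n : ℕ} (f : (Fin n → ℝ) → ℝ) (ε : Fin n → ZMod 2) (j : ℤ) (x : Fin n → ℝ) : ℝ :=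
  ∑' m : Fin n → ℤ, haarCoeff f ε j m * haarFn ε j m x

/-- The Haar square function `( Σ_j | Σ_{Q ∈ 𝒟_j} ⟨f,h^ε_Q⟩ h^ε_Q |² )^{1/2}`. -/
def haarSquareFn {n : ℕ} (f : (Fin n → ℝ) → ℝ) (ε : Fin n → ZMod 2) (x : Fin n → ℝ) : ℝ :=
  Real.sqrt (∑' j : ℤ, (haarLayer f ε j x) ^ 2)

/-- The (dyadic) Morrey norm `‖f‖_{M^p_q} = sup_{Q ∈ 𝒟} |Q|^{1/p−1/q} (∫_Q |f|^q)^{1/q}`. -/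
def morreyNorm {n : ℕ} (p q : ℝ) (f : (Fin n → ℝ) → ℝ) : ℝ≥0∞ :=
  ⨆ (j : ℤ) (m : Fin n → ℤ),
    volume (dyadicCube n j m) ^ (1 / p - 1 / q) *
      (∫⁻ x in dyadicCube n j m, ((‖f x‖₊ : ℝ≥0∞)) ^ q) ^ (1 / q)

/-- Membership in the Morrey space `M^p_q`. -/
def MemMorrey {n : ℕ} (p q : ℝ) (f : (Fin n → ℝ) → ℝ) : Prop :=
  AEStronglyMeasurable f volume ∧ morreyNorm p q f ≠ ⊤

/-- The average `m_Q(f) = |Q|⁻¹ ∫_Q f` over the dyadic cube `Q_{j,m}`. -/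
def cubeAvg {n : ℕ} (j : ℤ) (m : Fin n → ℤ) (f : (Fin n → ℝ) → ℝ) : ℝ :=
  (volume (dyadicCube n j m)).toReal⁻¹ * ∫ x in dyadicCube n j m, f x

/-- The dyadic BMO norm `sup_{Q ∈ 𝒟} m_Q(|a − m_Q(a)|)`. -/
def bmoNormD {n : ℕ} (a : (Fin n → ℝ) → ℝ) : ℝ≥0∞ :=
  ⨆ (j : ℤ) (m : Fin n → ℤ),
    ENNReal.ofReal (cubeAvg j m (fun x => |a x - cubeAvg j m a|))

/-- `Σ_{Q ∈ 𝒟_j} |Q|^{α/n} ⟨f,h^ε_Q⟩ h^ε_Q(x)`. -/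
def weightedLayer {n : ℕ} (α : ℝ) (f : (Fin n → ℝ) → ℝ) (ε : Fin n → ZMod 2) (j : ℤ)
    (x : Fin n → ℝ) : ℝ :=
  ∑' m : Fin n → ℤ,
    (volume (dyadicCube n j m)).toReal ^ (α / (n : ℝ)) * (haarCoeff f ε j m * haarFn ε j m x)

/-- The symmetric partial sum `Σ_{ε∈E} Σ_{j=−M}^{M} Σ_{Q∈𝒟_j} |Q|^{α/n} ⟨f,h^ε_Q⟩ h^ε_Q(x)`. -/
def dyadicIalphaPartial {n : ℕ} (α : ℝ) (f : (Fin n → ℝ) → ℝ) (M : ℕ) (x : Fin n → ℝ) : ℝ :=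
  ∑ ε ∈ haarSigns n, ∑ j ∈ Finset.Icc (-(M : ℤ)) (M : ℤ), weightedLayer α f ε j x

/-- The dyadic fractional integral operator `I_{α,dyadic}`, as the limit of `dyadicIalphaPartial`. -/
def dyadicIalpha {n : ℕ} (α : ℝ) (f : (Fin n → ℝ) → ℝ) (x : Fin n → ℝ) : ℝ :=
  limUnder atTop (fun M : ℕ => dyadicIalphaPartial α f M x)

/-- The commutator `[a, I_{α,dyadic}]f = a · I_{α,dyadic}f − I_{α,dyadic}(a f)`. -/
def dyadicComm {n : ℕ} (α : ℝ) (a f : (Fin n → ℝ) → ℝ) (x : Fin n → ℝ) : ℝ :=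
  a x * dyadicIalpha α f x - dyadicIalpha α (fun y => a y * f y) x

/-- Symmetric partial sums of the Haar expansion of `f`. -/
def haarPartial {n : ℕ} (f : (Fin n → ℝ) → ℝ) (M : ℕ) (x : Fin n → ℝ) : ℝ :=
  ∑ ε ∈ haarSigns n, ∑ j ∈ Finset.Icc (-(M : ℤ)) (M : ℤ), haarLayer f ε j x

/-- Convergence in `L^q` on every compact subset of `ℝⁿ`. -/
def TendstoLqLoc {n : ℕ} (q : ℝ) (F : ℕ → (Fin n → ℝ) → ℝ) (g : (Fin n → ℝ) → ℝ) : Prop :=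
  ∀ K : Set (Fin n → ℝ), IsCompact K →
    Tendsto (fun M => eLpNorm (fun x => F M x - g x) (ENNReal.ofReal q) (volume.restrict K))
      atTop (𝓝 0)

/-- The dyadic paraproduct `Σ_j Σ_{Q∈𝒟_j} ⟨f,χ_Q⟩ ⟨a,h^ε_Q⟩ h^ε_Q(x)/|Q|`. -/
def paraproduct {n : ℕ} (a f : (Fin n → ℝ) → ℝ) (ε : Fin n → ZMod 2) (x : Fin n → ℝ) : ℝ :=
  ∑' (j : ℤ) (m : Fin n → ℤ),
    (∫ y in dyadicCube n j m, f y) * haarCoeff a ε j m * haarFn ε j m x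
      / (volume (dyadicCube n j m)).toReal

/-- A `(p,q)`-block: an `L^q` function supported on a dyadic cube `Q` with
`‖A‖_{L^q} ≤ |Q|^{1/q−1/p}`. -/
def IsBlock {n : ℕ} (p q : ℝ) (A : (Fin n → ℝ) → ℝ) : Prop :=
  MemLp A (ENNReal.ofReal q) volume ∧
    ∃ (j : ℤ) (m : Fin n → ℤ), (∀ x ∉ dyadicCube n j m, A x = 0) ∧
      eLpNorm A (ENNReal.ofReal q) volume ≤ volume (dyadicCube n j m) ^ (1 / q - 1 / p)

/-- The block space (predual Morrey) norm `‖f‖_{H^p_q}`: infimum of `Σ|λⱼ|` over decompositions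
`f = Σ λⱼ aⱼ` into `(p,q)`-blocks. It equals `⊤` iff no decomposition exists. -/
def blockNorm {n : ℕ} (p q : ℝ) (f : (Fin n → ℝ) → ℝ) : ℝ≥0∞ :=
  ⨅ d : {d : (ℕ → ℝ) × (ℕ → (Fin n → ℝ) → ℝ) //
      (∀ i, IsBlock p q (d.2 i)) ∧ Summable (fun i => |d.1 i|) ∧
        ∀ᵐ x ∂volume, f x = ∑' i, d.1 i * d.2 i x},
    ENNReal.ofReal (∑' i, |(d : (ℕ → ℝ) × (ℕ → (Fin n → ℝ) → ℝ)).1 i|)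

/-- Membership in the span of Haar functions. -/
def InHaarSpan {n : ℕ} (b : (Fin n → ℝ) → ℝ) : Prop :=
  ∃ (s : Finset ((Fin n → ZMod 2) × ℤ × (Fin n → ℤ)))
    (c : (Fin n → ZMod 2) × ℤ × (Fin n → ℤ) → ℝ),
      (∀ u ∈ s, u.1 ≠ 0) ∧ ∀ x, b x = ∑ u ∈ s, c u * haarFn u.1 u.2.1 u.2.2 x

/-- `VMO_dyadic`: the closure in the dyadic BMO norm of the span of Haar functions. -/
def InVMOD {n : ℕ} (a : (Fin n → ℝ) → ℝ) : Prop :=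
  ∀ δ : ℝ, 0 < δ → ∃ b : (Fin n → ℝ) → ℝ, InHaarSpan b ∧
    bmoNormD (fun x => a x - b x) ≤ ENNReal.ofReal δ

/-- Euclidean distance on `Fin n → ℝ`. -/
def eucDist {n : ℕ} (x y : Fin n → ℝ) : ℝ :=
  Real.sqrt (∑ i, (x i - y i) ^ 2)

/-- The Riesz fractional integral `I_α f(x) = ∫ f(y)/|x−y|^{n−α} dy`. -/
def rieszPotential {n : ℕ} (α : ℝ) (f : (Fin n → ℝ) → ℝ) (x : Fin n → ℝ) : ℝ :=
  ∫ y, f y / eucDist x y ^ ((n : ℝ) - α)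

/-- A (half-open) cube in `ℝⁿ` with corner `c` and side length `l`. -/
def genCube {n : ℕ} (c : Fin n → ℝ) (l : ℝ) : Set (Fin n → ℝ) :=
  {x | ∀ i, c i ≤ x i ∧ x i < c i + l}

/-- Average over a general cube. -/
def genAvg {n : ℕ} (c : Fin n → ℝ) (l : ℝ) (f : (Fin n → ℝ) → ℝ) : ℝ :=
  (volume (genCube c l)).toReal⁻¹ * ∫ x in genCube c l, f x

/-- The (non-dyadic) BMO norm: supremum over all cubes of `m_Q(|a − m_Q(a)|)`. -/
def bmoNormFull {n : ℕ} (a : (Fin n → ℝ) → ℝ) : ℝ≥0∞ :=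
  ⨆ (c : Fin n → ℝ) (l : ℝ) (_ : 0 < l),
    ENNReal.ofReal (genAvg c l (fun x => |a x - genAvg c l a|))


/-- The truncated Haar square function `( Σ_{j≥k} | Σ_{Q∈𝒟_j} ⟨f,h^ε_Q⟩ h^ε_Q |² )^{1/2}`. -/
def haarSquareFnFrom {n : ℕ} (k : ℤ) (f : (Fin n → ℝ) → ℝ) (ε : Fin n → ZMod 2)
    (x : Fin n → ℝ) : ℝ :=
  Real.sqrt (∑' j : {j : ℤ // k ≤ j}, (haarLayer f ε j.1 x) ^ 2)

/-- `Σ_{Q ∈ 𝒟_k} ⟨f,χ_Q⟩ χ_Q(x)/|Q|`. -/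
def avgLayer {n : ℕ} (k : ℤ) (f : (Fin n → ℝ) → ℝ) (x : Fin n → ℝ) : ℝ :=
  ∑' m : Fin n → ℤ,
    (∫ y in dyadicCube n k m, f y) * Set.indicator (dyadicCube n k m) (fun _ => (1 : ℝ)) x
      / (volume (dyadicCube n k m)).toReal

/-- `Σ_{Q ∈ 𝒟_j, Q ⊆ R} ⟨f,h^ε_Q⟩ h^ε_Q(x)` where `R = Q_{k,m₀}`. -/
def haarLayerIn {n : ℕ} (f : (Fin n → ℝ) → ℝ) (ε : Fin n → ZMod 2) (k : ℤ) (m₀ : Fin n → ℤ)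
    (j : ℤ) (x : Fin n → ℝ) : ℝ :=
  ∑' m : {m : Fin n → ℤ // dyadicCube n j m ⊆ dyadicCube n k m₀},
    haarCoeff f ε j m.1 * haarFn ε j m.1 x

/-- The localized square function
`( Σ_{j ≥ −log₂ℓ(R)} | Σ_{Q∈𝒟_j, Q⊆R} ⟨f,h^ε_Q⟩ h^ε_Q |² )^{1/2}` for `R = Q_{k,m₀}`. -/
def haarSquareFnIn {n : ℕ} (f : (Fin n → ℝ) → ℝ) (ε : Fin n → ZMod 2) (k : ℤ) (m₀ : Fin n → ℤ)
    (x : Fin n → ℝ) : ℝ :=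
  Real.sqrt (∑' j : {j : ℤ // k ≤ j}, (haarLayerIn f ε k m₀ j.1 x) ^ 2)

/-- The square function `( Σ_j | Σ_{Q∈𝒟_j, Q ⊇ R} ⟨f,h^ε_Q⟩ h^ε_Q |² )^{1/2}` over cubes
containing `R = Q_{k,m₀}`. -/
def haarSquareFnUp {n : ℕ} (f : (Fin n → ℝ) → ℝ) (ε : Fin n → ZMod 2) (k : ℤ) (m₀ : Fin n → ℤ)
    (x : Fin n → ℝ) : ℝ :=
  Real.sqrt (∑' j : ℤ,
    (∑' m : {m : Fin n → ℤ // dyadicCube n k m₀ ⊆ dyadicCube n j m},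
      haarCoeff f ε j m.1 * haarFn ε j m.1 x) ^ 2)

section Helpers

variable {n : ℕ}

lemma dyadicCube_eq_pi (j : ℤ) (m : Fin n → ℤ) :
    dyadicCube n j m =
      Set.pi Set.univ (fun i => Set.Ico ((m i : ℝ) / 2 ^ j) (((m i : ℝ) + 1) / 2 ^ j)) := by
  ext x
  simp [dyadicCube, Set.mem_pi]

lemma measurableSet_dyadicCube (j : ℤ) (m : Fin n → ℤ) :
    MeasurableSet (dyadicCube n j m) := by
  rw [dyadicCube_eq_pi]
  exact MeasurableSet.univ_pi fun i => measurableSet_Ico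

lemma volume_dyadicCube (j : ℤ) (m : Fin n → ℤ) :
    volume (dyadicCube n j m) = ENNReal.ofReal ((2 : ℝ) ^ (-((j : ℝ) * n))) := by
  rw [dyadicCube_eq_pi, volume_pi_pi]
  have h1 : ∀ i : Fin n, volume (Set.Ico ((m i : ℝ) / 2 ^ j) (((m i : ℝ) + 1) / 2 ^ j))
      = ENNReal.ofReal ((2 : ℝ) ^ (-(j : ℝ))) := by
    intro i
    rw [Real.volume_Ico]
    congr 1
    have h2 : (0:ℝ) < (2:ℝ) ^ j := zpow_pos two_pos j
    have h3 : (2:ℝ) ^ (-(j:ℝ)) = ((2:ℝ) ^ j)⁻¹ := by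
      rw [Real.rpow_neg (by norm_num)]
      norm_cast
    rw [div_sub_div_same, show ((m i : ℝ) + 1 - m i) = 1 by ring, h3, one_div]
  simp only [h1]
  rw [Finset.prod_const, ← ENNReal.ofReal_pow (Real.rpow_nonneg (by norm_num) _)]
  congr 1
  rw [Finset.card_univ, Fintype.card_fin,
    ← Real.rpow_natCast ((2:ℝ) ^ (-(j:ℝ))) n, ← Real.rpow_mul (by norm_num)]
  ring_nf

end Helpers

section Helpers2

variable {n : ℕ}

lemma abs_haarBase1_le (e : ZMod 2) (t : ℝ) : |haarBase1 e t| ≤ 1 := by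
  unfold haarBase1
  by_cases h1 : (2*t) ∈ Set.Ico (0:ℝ) 1 <;> by_cases h2 : (2*t) ∈ Set.Ico (1:ℝ) 2
  · exact absurd h2.1 (not_le.mpr h1.2)
  · rw [Set.indicator_of_mem h1, Set.indicator_of_notMem h2]
    simp
  · rw [Set.indicator_of_notMem h1, Set.indicator_of_mem h2]
    rcases Nat.even_or_odd e.val with he | he
    · rw [he.neg_one_pow]; norm_num
    · rw [he.neg_one_pow]; norm_num
  · rw [Set.indicator_of_notMem h1, Set.indicator_of_notMem h2]
    norm_num

lemma haarBase1_eq_zero (e : ZMod 2) {t : ℝ} (ht : t < 0 ∨ 1 ≤ t) : haarBase1 e t = 0 := by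
  unfold haarBase1
  have h1 : (2*t) ∉ Set.Ico (0:ℝ) 1 := by
    simp only [Set.mem_Ico, not_and_or, not_le, not_lt]
    rcases ht with h | h
    · left; linarith
    · right; linarith
  have h2 : (2*t) ∉ Set.Ico (1:ℝ) 2 := by
    simp only [Set.mem_Ico, not_and_or, not_le, not_lt]
    rcases ht with h | h
    · left; linarith
    · right; linarith
  rw [Set.indicator_of_notMem h1, Set.indicator_of_notMem h2]
  ring

lemma abs_haarFn_le (ε : Fin n → ZMod 2) (j : ℤ) (m : Fin n → ℤ) (x : Fin n → ℝ) :
    |haarFn ε j m x| ≤ (2:ℝ) ^ (((j:ℝ) * n) / 2) := by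
  unfold haarFn haarBase
  rw [abs_mul, abs_of_pos (Real.rpow_pos_of_pos two_pos _)]
  have h1 : |∏ i, haarBase1 (ε i) ((2:ℝ) ^ j * x i - m i)| ≤ 1 := by
    rw [Finset.abs_prod]
    exact Finset.prod_le_one (fun i _ => abs_nonneg _) (fun i _ => abs_haarBase1_le _ _)
  exact mul_le_of_le_one_right (le_of_lt (Real.rpow_pos_of_pos two_pos _)) h1

lemma haarFn_eq_zero (ε : Fin n → ZMod 2) (j : ℤ) (m : Fin n → ℤ) {x : Fin n → ℝ}
    (hx : x ∉ dyadicCube n j m) : haarFn ε j m x = 0 := by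
  unfold haarFn haarBase
  simp only [dyadicCube, Set.mem_setOf_eq, not_forall] at hx
  obtain ⟨i, hi⟩ := hx
  have h2 : (0:ℝ) < (2:ℝ) ^ j := zpow_pos two_pos j
  have ht : (2:ℝ) ^ j * x i - m i < 0 ∨ 1 ≤ (2:ℝ) ^ j * x i - m i := by
    rw [not_and_or, not_le, not_lt] at hi
    rcases hi with h | h
    · left
      rw [sub_neg]
      calc (2:ℝ) ^ j * x i < 2 ^ j * ((m i : ℝ) / 2 ^ j) := by
            exact (mul_lt_mul_iff_right₀ h2).mpr h
        _ = m i := by field_simp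
    · right
      have : ((m i : ℝ) + 1) ≤ 2 ^ j * x i := by
        calc ((m i : ℝ) + 1) = 2 ^ j * (((m i : ℝ) + 1) / 2 ^ j) := by field_simp
          _ ≤ 2 ^ j * x i := (mul_le_mul_iff_right₀ h2).mpr h
      linarith
  rw [Finset.prod_eq_zero (Finset.mem_univ i) (haarBase1_eq_zero _ ht), mul_zero]

lemma dyadicCube_inj {j : ℤ} {m m' : Fin n → ℤ} {x : Fin n → ℝ}
    (h : x ∈ dyadicCube n j m) (h' : x ∈ dyadicCube n j m') : m = m' := by
  funext i
  have h2 : (0:ℝ) < (2:ℝ) ^ j := zpow_pos two_pos j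
  have key : ∀ m'' : Fin n → ℤ, x ∈ dyadicCube n j m'' → m'' i = ⌊x i * 2 ^ j⌋ := by
    intro m'' hm
    obtain ⟨ha, hb⟩ := hm i
    symm
    rw [Int.floor_eq_iff]
    constructor
    · exact (div_le_iff₀ h2).mp ha
    · push_cast
      exact (lt_div_iff₀ h2).mp hb
  rw [key m h, key m' h']

lemma corner_mem (k : ℤ) (m₀ : Fin n → ℤ) :
    (fun i => (m₀ i : ℝ) / 2 ^ k) ∈ dyadicCube n k m₀ := by
  intro i
  have h2 : (0:ℝ) < (2:ℝ) ^ k := zpow_pos two_pos k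
  refine ⟨le_refl _, ?_⟩
  rw [div_lt_div_iff₀ h2 h2]
  have : (m₀ i : ℝ) < m₀ i + 1 := by linarith
  nlinarith

lemma upCube_subsingleton (k j : ℤ) (m₀ : Fin n → ℤ) :
    Subsingleton {m : Fin n → ℤ // dyadicCube n k m₀ ⊆ dyadicCube n j m} := by
  constructor
  rintro ⟨m, hm⟩ ⟨m', hm'⟩
  exact Subtype.ext (dyadicCube_inj (hm (corner_mem k m₀)) (hm' (corner_mem k m₀)))

lemma upCube_isEmpty (hn : 0 < n) {k j : ℤ} (hkj : k < j) (m₀ : Fin n → ℤ) :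
    IsEmpty {m : Fin n → ℤ // dyadicCube n k m₀ ⊆ dyadicCube n j m} := by
  constructor
  rintro ⟨m, hm⟩
  set i : Fin n := ⟨0, hn⟩
  have h2k : (0:ℝ) < (2:ℝ) ^ k := zpow_pos two_pos k
  have h2j : (0:ℝ) < (2:ℝ) ^ j := zpow_pos two_pos j
  set c : Fin n → ℝ := fun i => (m₀ i : ℝ) / 2 ^ k with hc
  set d : Fin n → ℝ := fun i => (m₀ i : ℝ) / 2 ^ k + ((2:ℝ) ^ k)⁻¹ / 2 with hd
  have hcR : c ∈ dyadicCube n k m₀ := corner_mem k m₀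
  have hdR : d ∈ dyadicCube n k m₀ := by
    intro i'
    have hpos : (0:ℝ) < ((2:ℝ) ^ k)⁻¹ := inv_pos.mpr h2k
    have heq : ((m₀ i' : ℝ) + 1) / 2 ^ k = (m₀ i' : ℝ) / 2 ^ k + ((2:ℝ) ^ k)⁻¹ := by
      field_simp
    constructor
    · show (m₀ i' : ℝ) / 2 ^ k ≤ (m₀ i' : ℝ) / 2 ^ k + ((2:ℝ) ^ k)⁻¹ / 2
      linarith
    · show (m₀ i' : ℝ) / 2 ^ k + ((2:ℝ) ^ k)⁻¹ / 2 < ((m₀ i' : ℝ) + 1) / 2 ^ k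
      rw [heq]
      linarith
  have hcQ := hm hcR i
  have hdQ := hm hdR i
  have hlt : d i - c i < ((2:ℝ) ^ j)⁻¹ := by
    have h1 := hcQ.1
    have h2 := hdQ.2
    have : ((m i : ℝ) + 1) / 2 ^ j = (m i : ℝ) / 2 ^ j + ((2:ℝ) ^ j)⁻¹ := by field_simp
    rw [this] at h2
    linarith
  have hdc : d i - c i = ((2:ℝ) ^ k)⁻¹ / 2 := by simp [hc, hd]
  have hle : (2:ℝ) ^ (k+1) ≤ (2:ℝ) ^ j := by
    apply zpow_le_zpow_right₀ one_le_two
    omega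
  have hinv : ((2:ℝ) ^ j)⁻¹ ≤ ((2:ℝ) ^ k)⁻¹ / 2 := by
    have hi1 : ((2:ℝ) ^ j)⁻¹ ≤ ((2:ℝ) ^ (k+1))⁻¹ :=
      inv_anti₀ (by positivity) hle
    have hi2 : ((2:ℝ) ^ (k+1))⁻¹ = ((2:ℝ) ^ k)⁻¹ / 2 := by
      rw [zpow_add₀ (by norm_num : (2:ℝ) ≠ 0)]
      field_simp
    rw [hi2] at hi1
    exact hi1
  rw [hdc] at hlt
  linarith

end Helpers2

section Helpers3

variable {n : ℕ}

lemma lintegral_le_of_morrey (p : ℝ) (f : (Fin n → ℝ) → ℝ) (j : ℤ) (m : Fin n → ℤ) :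
    ∫⁻ x in dyadicCube n j m, (‖f x‖₊ : ℝ≥0∞) ≤
      volume (dyadicCube n j m) ^ (1 - 1/p) * morreyNorm p 1 f := by
  set v := volume (dyadicCube n j m) with hv
  set L := ∫⁻ x in dyadicCube n j m, (‖f x‖₊ : ℝ≥0∞) with hL
  have h0 : v ^ (1/p - 1) * L ≤ morreyNorm p 1 f := by
    unfold morreyNorm
    refine le_trans ?_ (le_iSup _ j)
    refine le_trans ?_ (le_iSup _ m)
    simp [ENNReal.rpow_one]; exact le_rfl
  have hvpos : v = ENNReal.ofReal ((2:ℝ) ^ (-((j:ℝ) * n))) := volume_dyadicCube j m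
  have hb : (0:ℝ) < (2:ℝ) ^ (-((j:ℝ) * n)) := Real.rpow_pos_of_pos two_pos _
  have ha0 : v ^ (1/p - 1) ≠ 0 := by
    rw [hvpos, ENNReal.ofReal_rpow_of_pos hb]
    simp [Real.rpow_pos_of_pos hb]
  have hatop : v ^ (1/p - 1) ≠ ⊤ := by
    rw [hvpos, ENNReal.ofReal_rpow_of_pos hb]
    exact ENNReal.ofReal_ne_top
  have hinv : (v ^ (1/p - 1))⁻¹ = v ^ (1 - 1/p) := by
    rw [show (1 - 1/p) = -(1/p - 1) by ring, ENNReal.rpow_neg]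
  calc L = (v ^ (1/p - 1))⁻¹ * (v ^ (1/p - 1) * L) := by
        rw [← mul_assoc, ENNReal.inv_mul_cancel ha0 hatop, one_mul]
    _ ≤ (v ^ (1/p - 1))⁻¹ * morreyNorm p 1 f := mul_le_mul_right h0 _
    _ = v ^ (1 - 1/p) * morreyNorm p 1 f := by rw [hinv]

lemma abs_haarCoeff_le (f : (Fin n → ℝ) → ℝ) (ε : Fin n → ZMod 2) (j : ℤ) (m : Fin n → ℤ)
    (hm : AEStronglyMeasurable f volume)
    (hfin : (∫⁻ x in dyadicCube n j m, (‖f x‖₊ : ℝ≥0∞)) ≠ ⊤) :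
    |haarCoeff f ε j m| ≤
      (2:ℝ) ^ (((j:ℝ) * n) / 2) * (∫⁻ x in dyadicCube n j m, (‖f x‖₊ : ℝ≥0∞)).toReal := by
  set Q := dyadicCube n j m with hQ
  set c := (2:ℝ) ^ (((j:ℝ) * n) / 2) with hc
  have hc0 : 0 < c := Real.rpow_pos_of_pos two_pos _
  have hInt : IntegrableOn f Q volume := ⟨hm.restrict, hfin.lt_top⟩
  have hmeas : MeasurableSet Q := measurableSet_dyadicCube j m
  have hIndInt : Integrable (Set.indicator Q (fun y => c * ‖f y‖)) volume := by
    rw [integrable_indicator_iff hmeas]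
    exact (hInt.norm.const_mul c)
  calc |haarCoeff f ε j m| = ‖∫ x, f x * haarFn ε j m x‖ := (Real.norm_eq_abs _).symm
    _ ≤ ∫ x, ‖f x * haarFn ε j m x‖ := norm_integral_le_integral_norm _
    _ ≤ ∫ x, Set.indicator Q (fun y => c * ‖f y‖) x := by
        apply integral_mono_of_nonneg
        · filter_upwards with x using norm_nonneg _
        · exact hIndInt
        · filter_upwards with x
          by_cases hx : x ∈ Q
          · rw [Set.indicator_of_mem hx, norm_mul]
            have h1 : ‖haarFn ε j m x‖ ≤ c := by
              rw [Real.norm_eq_abs]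
              exact abs_haarFn_le ε j m x
            calc ‖f x‖ * ‖haarFn ε j m x‖ ≤ ‖f x‖ * c :=
                  mul_le_mul_of_nonneg_left h1 (norm_nonneg _)
              _ = c * ‖f x‖ := mul_comm _ _
          · rw [Set.indicator_of_notMem hx, haarFn_eq_zero ε j m hx, mul_zero, norm_zero]
    _ = ∫ x in Q, c * ‖f x‖ := integral_indicator hmeas
    _ = c * ∫ x in Q, ‖f x‖ := integral_const_mul c _
    _ = c * (∫⁻ x in Q, (‖f x‖₊ : ℝ≥0∞)).toReal := by
        simp only [integral_norm_eq_lintegral_enorm hm.restrict, enorm_eq_nnnorm]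

end Helpers3

section Helpers4

variable {n : ℕ}

lemma haarSquareFnUp_pointwise (hn : 0 < n) {p : ℝ} (hp : 1 ≤ p)
    (f : (Fin n → ℝ) → ℝ) (ε : Fin n → ZMod 2) (hf : MemMorrey p 1 f)
    (k : ℤ) (m₀ : Fin n → ℤ) (x : Fin n → ℝ) :
    haarSquareFnUp f ε k m₀ x ≤
      (morreyNorm p 1 f).toReal * (2:ℝ) ^ ((k:ℝ) * n / p) *
        Real.sqrt (1 / (1 - (2:ℝ) ^ (-(2 * (n:ℝ) / p)))) := by
  have hp0 : (0:ℝ) < p := lt_of_lt_of_le one_pos hp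
  set Vr := (morreyNorm p 1 f).toReal with hVr
  have hVr0 : 0 ≤ Vr := ENNReal.toReal_nonneg
  set r := (2:ℝ) ^ (-(2 * (n:ℝ) / p)) with hr
  have hr0 : 0 < r := Real.rpow_pos_of_pos two_pos _
  have hr1 : r < 1 := by
    apply Real.rpow_lt_one_of_one_lt_of_neg one_lt_two
    have : (0:ℝ) < 2 * (n:ℝ) / p := by positivity
    linarith
  set T : ℤ → ℝ := fun j =>
    ∑' m : {m : Fin n → ℤ // dyadicCube n k m₀ ⊆ dyadicCube n j m},
      haarCoeff f ε j m.1 * haarFn ε j m.1 x with hT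
  set b : ℤ → ℝ := fun j => (2:ℝ) ^ ((j:ℝ) * n / p) * Vr with hb
  have hb0 : ∀ j, 0 ≤ b j := fun j =>
    mul_nonneg (le_of_lt (Real.rpow_pos_of_pos two_pos _)) hVr0
  -- step 1 : |T j| ≤ b j
  have step1 : ∀ j : ℤ, |T j| ≤ b j := by
    intro j
    haveI := upCube_subsingleton (n := n) k j m₀
    rcases isEmpty_or_nonempty {m : Fin n → ℤ // dyadicCube n k m₀ ⊆ dyadicCube n j m} with
      hE | hE
    · rw [hT]
      simp only [tsum_empty, abs_zero]
      exact hb0 j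
    · obtain ⟨m⟩ := hE
      have hTj : T j = haarCoeff f ε j m.1 * haarFn ε j m.1 x := by
        rw [hT]
        exact tsum_eq_single m (fun m' hm' => absurd (Subsingleton.elim m' m) hm')
      have hbpos : (0:ℝ) < (2:ℝ) ^ (-((j:ℝ) * n)) := Real.rpow_pos_of_pos two_pos _
      have hfin : (∫⁻ y in dyadicCube n j m.1, (‖f y‖₊ : ℝ≥0∞)) ≠ ⊤ := by
        apply ne_top_of_le_ne_top _ (lintegral_le_of_morrey p f j m.1)
        apply ENNReal.mul_ne_top _ hf.2
        rw [volume_dyadicCube, ENNReal.ofReal_rpow_of_pos hbpos]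
        exact ENNReal.ofReal_ne_top
      have hIle : (∫⁻ y in dyadicCube n j m.1, (‖f y‖₊ : ℝ≥0∞)).toReal ≤
          ((2:ℝ) ^ (-((j:ℝ) * n))) ^ ((1:ℝ) - 1/p) * Vr := by
        have h1 := lintegral_le_of_morrey p f j m.1
        have h2 : (volume (dyadicCube n j m.1) ^ ((1:ℝ) - 1/p) * morreyNorm p 1 f).toReal
            = ((2:ℝ) ^ (-((j:ℝ) * n))) ^ ((1:ℝ) - 1/p) * Vr := by
          rw [volume_dyadicCube, ENNReal.ofReal_rpow_of_pos hbpos, ENNReal.toReal_mul,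
            ENNReal.toReal_ofReal (Real.rpow_nonneg (le_of_lt hbpos) _)]
        rw [← h2]
        apply ENNReal.toReal_mono _ h1
        apply ENNReal.mul_ne_top _ hf.2
        rw [volume_dyadicCube, ENNReal.ofReal_rpow_of_pos hbpos]
        exact ENNReal.ofReal_ne_top
      set c := (2:ℝ) ^ (((j:ℝ) * n) / 2) with hc
      have hc0 : 0 < c := Real.rpow_pos_of_pos two_pos _
      have hcoeff : |haarCoeff f ε j m.1| ≤
          c * (((2:ℝ) ^ (-((j:ℝ) * n))) ^ ((1:ℝ) - 1/p) * Vr) := by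
        refine le_trans (abs_haarCoeff_le f ε j m.1 hf.1 hfin) ?_
        exact mul_le_mul_of_nonneg_left hIle (le_of_lt hc0)
      have habs : |T j| ≤ c * (((2:ℝ) ^ (-((j:ℝ) * n))) ^ ((1:ℝ) - 1/p) * Vr) * c := by
        rw [hTj, abs_mul]
        apply mul_le_mul hcoeff (abs_haarFn_le ε j m.1 x) (abs_nonneg _)
        positivity
      refine le_trans habs (le_of_eq ?_)
      rw [hc, hb, ← Real.rpow_mul (by norm_num : (0:ℝ) ≤ 2) (-((j:ℝ) * n))]
      rw [show (2:ℝ) ^ ((j:ℝ) * n / 2) * ((2:ℝ) ^ (-((j:ℝ) * n) * (1 - 1/p)) * Vr) *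
            (2:ℝ) ^ ((j:ℝ) * n / 2)
          = (2:ℝ) ^ ((j:ℝ) * n / 2) * (2:ℝ) ^ ((j:ℝ) * n / 2) *
            (2:ℝ) ^ (-((j:ℝ) * n) * (1 - 1/p)) * Vr by ring]
      rw [← Real.rpow_add two_pos, ← Real.rpow_add two_pos]
      congr 1
      ring
  -- step 2 : T j = 0 for k < j
  have step2 : ∀ j : ℤ, k < j → T j = 0 := by
    intro j hkj
    haveI := upCube_isEmpty hn hkj m₀
    rw [hT]
    exact tsum_empty
  -- reindex
  set g : ℕ → ℝ := fun i => (T (k - i)) ^ 2 with hg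
  have hsum_eq : ∑' j : ℤ, (T j) ^ 2 = ∑' i : ℕ, g i := by
    refine (Function.Injective.tsum_eq (g := fun i : ℕ => k - (i:ℤ)) ?_ ?_).symm
    · intro a b hab
      simp only at hab
      omega
    · intro j hj
      rcases le_or_gt j k with hjk | hjk
      · refine ⟨(k - j).toNat, ?_⟩
        show k - ((k - j).toNat : ℤ) = j
        omega
      · exfalso
        apply hj
        show T j ^ 2 = 0
        rw [step2 j hjk]
        norm_num
  set C0 := Vr ^ 2 * (2:ℝ) ^ (2 * (k:ℝ) * n / p) with hC0
  have hC00 : 0 ≤ C0 := by positivity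
  have hGeq : ∀ i : ℕ, (b (k - i)) ^ 2 = C0 * r ^ i := by
    intro i
    have e1 : r ^ i = (2:ℝ) ^ (-(2 * (n:ℝ) / p) * i) := by
      rw [hr, ← Real.rpow_natCast ((2:ℝ) ^ (-(2 * (n:ℝ) / p))) i,
        ← Real.rpow_mul (by norm_num : (0:ℝ) ≤ 2)]
    have e2 : (b (k - i)) ^ 2 = Vr ^ 2 * (2:ℝ) ^ (((k - i : ℤ):ℝ) * n / p + ((k - i : ℤ):ℝ) * n / p) := by
      show ((2:ℝ) ^ (((k - i : ℤ):ℝ) * n / p) * Vr) ^ 2 = _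
      rw [Real.rpow_add two_pos]
      ring
    rw [e1, e2, hC0, mul_assoc, ← Real.rpow_add two_pos]
    congr 2
    push_cast
    ring
  have hG : Summable (fun i : ℕ => C0 * r ^ i) :=
    (summable_geometric_of_lt_one (le_of_lt hr0) hr1).mul_left C0
  have hgG : ∀ i : ℕ, g i ≤ C0 * r ^ i := by
    intro i
    rw [hg, ← hGeq i]
    calc (T (k - i)) ^ 2 = |T (k - i)| ^ 2 := (sq_abs _).symm
      _ ≤ (b (k - i)) ^ 2 := pow_le_pow_left₀ (abs_nonneg _) (step1 _) 2
  have hg0 : ∀ i : ℕ, 0 ≤ g i := fun i => sq_nonneg _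
  have hsg : Summable g := hG.of_nonneg_of_le hg0 hgG
  have htle : ∑' j : ℤ, (T j) ^ 2 ≤ C0 * (1 - r)⁻¹ := by
    rw [hsum_eq]
    calc ∑' i, g i ≤ ∑' i, C0 * r ^ i := Summable.tsum_le_tsum hgG hsg hG
      _ = C0 * (1 - r)⁻¹ := by
          rw [_root_.tsum_mul_left, tsum_geometric_of_lt_one (le_of_lt hr0) hr1]
  -- conclude
  set P := Vr * (2:ℝ) ^ ((k:ℝ) * n / p) * Real.sqrt (1 / (1 - r)) with hP
  have hP0 : 0 ≤ P :=
    mul_nonneg (mul_nonneg hVr0 (Real.rpow_pos_of_pos two_pos _).le) (Real.sqrt_nonneg _)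
  have hPsq : P ^ 2 = C0 * (1 - r)⁻¹ := by
    rw [hP, hC0, mul_pow, mul_pow,
      Real.sq_sqrt (div_nonneg one_pos.le (by linarith : (0:ℝ) ≤ 1 - r))]
    rw [show ((2:ℝ) ^ ((k:ℝ) * n / p)) ^ 2
        = (2:ℝ) ^ ((k:ℝ) * n / p) * (2:ℝ) ^ ((k:ℝ) * n / p) by ring, ← Real.rpow_add two_pos]
    rw [one_div]
    rw [show (k:ℝ) * (n:ℝ) / p + (k:ℝ) * (n:ℝ) / p = 2 * (k:ℝ) * (n:ℝ) / p by ring]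
  calc haarSquareFnUp f ε k m₀ x = Real.sqrt (∑' j : ℤ, (T j) ^ 2) := rfl
    _ ≤ Real.sqrt (P ^ 2) := Real.sqrt_le_sqrt (by rw [hPsq]; exact htle)
    _ = P := Real.sqrt_sq hP0

end Helpers4

/-- estimate (100107-1): for `f ∈ M^p_1` and a dyadic cube `R = Q_{k,m₀}`,
`|R|^{1/p−1/q} (∫_R (Σ_j |Σ_{Q∈𝒟_j, Q⊇R}⟨f,h^ε_Q⟩h^ε_Q|²)^{q/2})^{1/q} ≤ C‖f‖_{M^p_1}`. -/
theorem squareFn_over_containing_cubes_bound (n : ℕ) (hn : 0 < n) (p q : ℝ)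
    (hq : 1 ≤ q) (hqp : q ≤ p) :
    ∃ C : ℝ, 0 < C ∧
      ∀ (f : (Fin n → ℝ) → ℝ) (ε : Fin n → ZMod 2), MemMorrey p 1 f → ε ≠ 0 →
        ∀ (k : ℤ) (m₀ : Fin n → ℤ),
          volume (dyadicCube n k m₀) ^ (1 / p - 1 / q) *
              (∫⁻ x in dyadicCube n k m₀,
                ((‖haarSquareFnUp f ε k m₀ x‖₊ : ℝ≥0∞)) ^ q) ^ (1 / q)
            ≤ ENNReal.ofReal C * morreyNorm p 1 f := by
  have hp : 1 ≤ p := le_trans hq hqp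
  have hp0 : (0:ℝ) < p := lt_of_lt_of_le one_pos hp
  have hq0 : (0:ℝ) < q := lt_of_lt_of_le one_pos hq
  set r := (2:ℝ) ^ (-(2 * (n:ℝ) / p)) with hrdef
  have hr0 : 0 < r := Real.rpow_pos_of_pos two_pos _
  have hr1 : r < 1 := by
    apply Real.rpow_lt_one_of_one_lt_of_neg one_lt_two
    have : (0:ℝ) < 2 * (n:ℝ) / p := by positivity
    linarith
  set C := Real.sqrt (1 / (1 - r)) with hCdef
  have hC0 : 0 < C := Real.sqrt_pos.mpr (div_pos one_pos (by linarith))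
  refine ⟨C, hC0, ?_⟩
  intro f ε hf hε k m₀
  set Vr := (morreyNorm p 1 f).toReal with hVrdef
  have hVr0 : 0 ≤ Vr := ENNReal.toReal_nonneg
  set P := Vr * (2:ℝ) ^ ((k:ℝ) * n / p) * C with hPdef
  have hP0 : 0 ≤ P :=
    mul_nonneg (mul_nonneg hVr0 (Real.rpow_pos_of_pos two_pos _).le) (le_of_lt hC0)
  have hpt : ∀ x, haarSquareFnUp f ε k m₀ x ≤ P := fun x =>
    haarSquareFnUp_pointwise hn hp f ε hf k m₀ x
  have hnn : ∀ x, ((‖haarSquareFnUp f ε k m₀ x‖₊ : ℝ≥0∞)) ≤ ENNReal.ofReal P := by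
    intro x
    have h0x : (0:ℝ) ≤ haarSquareFnUp f ε k m₀ x := Real.sqrt_nonneg _
    rw [← enorm_eq_nnnorm, Real.enorm_eq_ofReal h0x]
    exact ENNReal.ofReal_le_ofReal (hpt x)
  have hb : (0:ℝ) < (2:ℝ) ^ (-((k:ℝ) * n)) := Real.rpow_pos_of_pos two_pos _
  have hvol : volume (dyadicCube n k m₀) = ENNReal.ofReal ((2:ℝ) ^ (-((k:ℝ) * n))) :=
    volume_dyadicCube k m₀
  have hv0 : volume (dyadicCube n k m₀) ≠ 0 := by
    rw [hvol]
    simp [hb]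
  have hvtop : volume (dyadicCube n k m₀) ≠ ⊤ := by
    rw [hvol]
    exact ENNReal.ofReal_ne_top
  have hint : (∫⁻ x in dyadicCube n k m₀, ((‖haarSquareFnUp f ε k m₀ x‖₊ : ℝ≥0∞)) ^ q)
      ≤ (ENNReal.ofReal P) ^ q * volume (dyadicCube n k m₀) := by
    calc (∫⁻ x in dyadicCube n k m₀, ((‖haarSquareFnUp f ε k m₀ x‖₊ : ℝ≥0∞)) ^ q)
        ≤ ∫⁻ _x in dyadicCube n k m₀, (ENNReal.ofReal P) ^ q :=
          lintegral_mono fun x => ENNReal.rpow_le_rpow (hnn x) (le_of_lt hq0)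
      _ = (ENNReal.ofReal P) ^ q * volume (dyadicCube n k m₀) := setLIntegral_const _ _
  have h1 : ((ENNReal.ofReal P) ^ q * volume (dyadicCube n k m₀)) ^ ((1:ℝ)/q)
      = ENNReal.ofReal P * volume (dyadicCube n k m₀) ^ ((1:ℝ)/q) := by
    rw [ENNReal.mul_rpow_of_nonneg _ _ (by positivity : (0:ℝ) ≤ 1/q), ← ENNReal.rpow_mul,
      mul_one_div_cancel (ne_of_gt hq0), ENNReal.rpow_one]
  have h2 : volume (dyadicCube n k m₀) ^ (1/p - 1/q) *
        (ENNReal.ofReal P * volume (dyadicCube n k m₀) ^ ((1:ℝ)/q))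
      = ENNReal.ofReal P * volume (dyadicCube n k m₀) ^ ((1:ℝ)/p) := by
    rw [show volume (dyadicCube n k m₀) ^ (1/p - 1/q) *
          (ENNReal.ofReal P * volume (dyadicCube n k m₀) ^ ((1:ℝ)/q))
        = ENNReal.ofReal P * (volume (dyadicCube n k m₀) ^ (1/p - 1/q) *
            volume (dyadicCube n k m₀) ^ ((1:ℝ)/q)) by ring]
    rw [← ENNReal.rpow_add _ _ hv0 hvtop]
    congr 1
    ring
  have h3 : volume (dyadicCube n k m₀) ^ ((1:ℝ)/p)
      = ENNReal.ofReal ((2:ℝ) ^ (-((k:ℝ) * n) * (1/p))) := by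
    rw [hvol, ENNReal.ofReal_rpow_of_pos hb, ← Real.rpow_mul (by norm_num : (0:ℝ) ≤ 2)]
  have h4 : ENNReal.ofReal P * ENNReal.ofReal ((2:ℝ) ^ (-((k:ℝ) * n) * (1/p)))
      = ENNReal.ofReal C * morreyNorm p 1 f := by
    rw [← ENNReal.ofReal_mul hP0]
    have hPC : P * (2:ℝ) ^ (-((k:ℝ) * n) * (1/p)) = C * Vr := by
      rw [hPdef]
      rw [show Vr * (2:ℝ) ^ ((k:ℝ) * n / p) * C * (2:ℝ) ^ (-((k:ℝ) * n) * (1/p))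
          = ((2:ℝ) ^ ((k:ℝ) * n / p) * (2:ℝ) ^ (-((k:ℝ) * n) * (1/p))) * (C * Vr) by ring]
      rw [← Real.rpow_add two_pos,
        show (k:ℝ) * n / p + -((k:ℝ) * n) * (1/p) = 0 by ring, Real.rpow_zero, one_mul]
    rw [hPC, ENNReal.ofReal_mul (le_of_lt hC0), hVrdef, ENNReal.ofReal_toReal hf.2]
  calc volume (dyadicCube n k m₀) ^ (1 / p - 1 / q) *
        (∫⁻ x in dyadicCube n k m₀,
          ((‖haarSquareFnUp f ε k m₀ x‖₊ : ℝ≥0∞)) ^ q) ^ (1 / q)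
      ≤ volume (dyadicCube n k m₀) ^ (1 / p - 1 / q) *
          ((ENNReal.ofReal P) ^ q * volume (dyadicCube n k m₀)) ^ ((1:ℝ)/q) :=
        mul_le_mul_right (ENNReal.rpow_le_rpow hint (by positivity : (0:ℝ) ≤ 1/q)) _
    _ = ENNReal.ofReal P * volume (dyadicCube n k m₀) ^ ((1:ℝ)/p) := by rw [h1, h2]
    _ = ENNReal.ofReal C * morreyNorm p 1 f := by rw [h3, h4]

end
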